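/- Let (σ_m)_{m≥1} be unitaries satisfying the braid relations, and suppose the strong operator limits α_i := sot-lim_m σ_{i+1}σ_{i+2}···σ_m exist for all i ≥ 0. Then for 0 ≤ i < j, α_i^* σ_{j+1} = σ_j α_i^*. -/
import Mathlib


/-- The finite product `σ_a σ_{a+1} ⋯ σ_b` applied to a vector:
`chainWord σ a b x = σ a (σ (a+1) (⋯ (σ b x)))` (the identity if `a > b`). -/
def chainWord {H : Type*} [NormedAddCommGroup H] [InnerProductSpace ℂ H]
    (σ : ℕ → H ≃ₗᵢ[ℂ] H) (a b : ℕ) (x : H) : H :=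
  (List.range' a (b + 1 - a)).foldr (fun i y => σ i y) x

section Aux

variable {H : Type*} [NormedAddCommGroup H] [InnerProductSpace ℂ H]
  (σ : ℕ → H ≃ₗᵢ[ℂ] H)

lemma chainWord_cons (a b : ℕ) (h : a ≤ b) (x : H) :
    chainWord σ a b x = σ a (chainWord σ (a + 1) b x) := by
  have h1 : b + 1 - a = (b - a) + 1 := by omega
  have h2 : b + 1 - (a + 1) = b - a := by omega
  simp [chainWord, h1, h2, List.range'_succ]

lemma chainWord_snoc (a b : ℕ) (h : a ≤ b + 1) (x : H) :
    chainWord σ a (b + 1) x = chainWord σ a b (σ (b + 1) x) := by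
  have h1 : b + 2 - a = (b + 1 - a) + 1 := by omega
  have h2 : a + (b + 1 - a) = b + 1 := by omega
  simp only [chainWord]
  rw [h1, List.range'_concat, List.foldr_append]
  simp only [one_mul, h2, List.foldr]

lemma chainWord_pair (j : ℕ) (x : H) :
    chainWord σ j (j + 1) x = σ j (σ (j + 1) x) := by
  have h1 : j + 1 + 1 - j = 2 := by omega
  simp [chainWord, h1, List.range'_succ]

variable {hB1 : ∀ m : ℕ, 1 ≤ m → ∀ x : H,
      σ m (σ (m + 1) (σ m x)) = σ (m + 1) (σ m (σ (m + 1) x))}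

/-- Push `σ j` through the word `σ a ⋯ σ (j+1)`, turning it into `σ (j+1)` on the left. -/
lemma push_through
    (hB1 : ∀ m : ℕ, 1 ≤ m → ∀ x : H,
      σ m (σ (m + 1) (σ m x)) = σ (m + 1) (σ m (σ (m + 1) x)))
    (hB2 : ∀ m n : ℕ, 1 ≤ m → m + 2 ≤ n → ∀ x : H, σ m (σ n x) = σ n (σ m x))
    (j : ℕ) :
    ∀ k a, a + k = j → 1 ≤ a → ∀ z : H,
      chainWord σ a (j + 1) (σ j z) = σ (j + 1) (chainWord σ a (j + 1) z) := by
  intro k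
  induction k with
  | zero =>
      intro a ha h1 z
      have : a = j := by omega
      subst this
      rw [chainWord_pair, chainWord_pair, hB1 a h1]
  | succ k ih =>
      intro a ha h1 z
      have hlt : a + 1 ≤ j := by omega
      have hle : a ≤ j + 1 := by omega
      rw [chainWord_cons σ a (j + 1) hle, chainWord_cons σ a (j + 1) hle,
        ih (a + 1) (by omega) (by omega), hB2 a (j + 1) h1 (by omega)]

/-- The key intertwining identity for the finite words. -/
lemma key_word
    (hB1 : ∀ m : ℕ, 1 ≤ m → ∀ x : H,
      σ m (σ (m + 1) (σ m x)) = σ (m + 1) (σ m (σ (m + 1) x)))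
    (hB2 : ∀ m n : ℕ, 1 ≤ m → m + 2 ≤ n → ∀ x : H, σ m (σ n x) = σ n (σ m x))
    (i j : ℕ) (hij : i < j) :
    ∀ m, j + 1 ≤ m → ∀ y : H,
      chainWord σ (i + 1) m (σ j y) = σ (j + 1) (chainWord σ (i + 1) m y) := by
  intro m hm
  induction m, hm using Nat.le_induction with
  | base =>
      intro y
      exact push_through σ hB1 hB2 j (j - (i + 1)) (i + 1) (by omega) (by omega) y
  | succ m hm ih =>
      intro y
      have h1 : i + 1 ≤ m + 1 := by omega
      rw [chainWord_snoc σ (i + 1) m h1, chainWord_snoc σ (i + 1) m h1,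
        ← hB2 j (m + 1) (by omega) (by omega), ih]

end Aux

/-- Let `(σ m)_{m ≥ 1}` be unitaries satisfying the braid relations, and suppose the
strong operator limits `α i = sot-lim_m σ_{i+1} σ_{i+2} ⋯ σ_m` exist (as continuous
linear maps `α i`).  Then for `0 ≤ i < j` one has `α_i^* σ_{j+1} = σ_j α_i^*`. -/
theorem adjoint_intertwines_braid_generators
    {H : Type*} [NormedAddCommGroup H] [InnerProductSpace ℂ H] [CompleteSpace H]
    (σ : ℕ → H ≃ₗᵢ[ℂ] H)
    (hB1 : ∀ m : ℕ, 1 ≤ m → ∀ x : H,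
      σ m (σ (m + 1) (σ m x)) = σ (m + 1) (σ m (σ (m + 1) x)))
    (hB2 : ∀ m n : ℕ, 1 ≤ m → m + 2 ≤ n → ∀ x : H, σ m (σ n x) = σ n (σ m x))
    (α : ℕ → H →L[ℂ] H)
    (hα : ∀ (i : ℕ) (x : H),
      Filter.Tendsto (fun m => chainWord σ (i + 1) m x) Filter.atTop
        (nhds (α i x)))
    (i j : ℕ) (hij : i < j) (x : H) :
    ContinuousLinearMap.adjoint (α i) (σ (j + 1) x) =
      σ j (ContinuousLinearMap.adjoint (α i) x) := by
  -- First, the SOT-limit version of the word identity: α i ∘ σ j = σ (j+1) ∘ α i.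
  have key : ∀ y : H, α i (σ j y) = σ (j + 1) (α i y) := by
    intro y
    have h1 : Filter.Tendsto (fun m => chainWord σ (i + 1) m (σ j y))
        Filter.atTop (nhds (α i (σ j y))) := hα i (σ j y)
    have h2 : Filter.Tendsto (fun m => σ (j + 1) (chainWord σ (i + 1) m y))
        Filter.atTop (nhds (σ (j + 1) (α i y))) :=
      ((σ (j + 1)).continuous.tendsto _).comp (hα i y)
    have heq : (fun m => chainWord σ (i + 1) m (σ j y)) =ᶠ[Filter.atTop]
        (fun m => σ (j + 1) (chainWord σ (i + 1) m y)) := by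
      filter_upwards [Filter.eventually_ge_atTop (j + 1)] with m hm
      exact key_word σ hB1 hB2 i j hij m hm y
    exact tendsto_nhds_unique (h1.congr' heq) h2
  -- Now pass to adjoints via inner products.
  apply ext_inner_left ℂ
  intro y
  rw [ContinuousLinearMap.adjoint_inner_right]
  have hy : α i y = σ (j + 1) (α i ((σ j).symm y)) := by
    rw [← key ((σ j).symm y), LinearIsometryEquiv.apply_symm_apply]
  rw [hy, LinearIsometryEquiv.inner_map_map]
  rw [← (σ j).apply_symm_apply y, LinearIsometryEquiv.inner_map_map,
    ContinuousLinearMap.adjoint_inner_right]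
  simp
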